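/- Let V, I : [0,∞) → (0,∞) be differentiable with I'(t) = μ₁ I(t) and V'(t) ≤ μ₂ V(t) - C V(t)^{5/3}/I(t)^{4/3}, where C > 0 and R := (2/3)μ₂ - (4/3)μ₁ > 0. Then V(t) ≤ C' e^{μ₂ t} I(0)² (t-1)^{-3/2} for all t > 1, with C' depending only on C. -/

import Mathlib

open Real Set

theorem exponential_moment_decay (C : ℝ) (hC : 0 < C) :
    ∃ C' : ℝ, 0 < C' ∧
      ∀ (μ₁ μ₂ : ℝ) (V I : ℝ → ℝ),
        (∀ t, 0 ≤ t → 0 < V t) → (∀ t, 0 ≤ t → 0 < I t) →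
        (∀ t, 0 ≤ t → DifferentiableAt ℝ V t) → (∀ t, 0 ≤ t → DifferentiableAt ℝ I t) →
        (∀ t, 0 ≤ t → deriv I t = μ₁ * I t) →
        (∀ t, 0 ≤ t →
          deriv V t ≤ μ₂ * V t - C * (V t) ^ ((5 : ℝ) / 3) / (I t) ^ ((4 : ℝ) / 3)) →
        0 < (2 / 3) * μ₂ - (4 / 3) * μ₁ →
        ∀ t, 1 < t →
          V t ≤ C' * Real.exp (μ₂ * t) * (I 0) ^ 2 * (t - 1) ^ (-(3 : ℝ) / 2) := by
  refine ⟨(2 * C / 3) ^ (-(3 : ℝ) / 2), Real.rpow_pos_of_pos (by positivity) _, ?_⟩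
  intro μ₁ μ₂ V I hV hI hVd hId hIde hVde hR t ht
  have hI0 : 0 < I 0 := hI 0 le_rfl
  -- derivative of exp (c * y)
  have hexp : ∀ (c s : ℝ), HasDerivAt (fun y => Real.exp (c * y)) (Real.exp (c * s) * c) s := by
    intro c s
    simpa using ((hasDerivAt_id s).const_mul c).exp
  -- Step A : I s = I 0 * exp (μ₁ s)
  have hIeq : ∀ s, 0 ≤ s → I s = I 0 * Real.exp (μ₁ * s) := by
    intro s hs
    have key : ∀ x ∈ Icc (0 : ℝ) s,
        I x * Real.exp (-μ₁ * x) = I 0 * Real.exp (-μ₁ * 0) := by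
      apply constant_of_has_deriv_right_zero
      · intro x hx
        exact ((hId x hx.1).continuousAt.mul
          (Real.continuous_exp.comp (continuous_const.mul continuous_id)).continuousAt).continuousWithinAt
      · intro x hx
        have h1 : HasDerivAt (fun y => I y * Real.exp (-μ₁ * y))
            (deriv I x * Real.exp (-μ₁ * x) + I x * (Real.exp (-μ₁ * x) * -μ₁)) x :=
          (hId x hx.1).hasDerivAt.mul (hexp (-μ₁) x)
        have h2 : deriv I x * Real.exp (-μ₁ * x) + I x * (Real.exp (-μ₁ * x) * -μ₁) = 0 := by
          rw [hIde x hx.1]; ring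
        rw [h2] at h1
        exact h1.hasDerivWithinAt
    have h2 := key s ⟨hs, le_rfl⟩
    rw [mul_zero, Real.exp_zero, mul_one] at h2
    have h3 : Real.exp (μ₁ * s) * Real.exp (-μ₁ * s) = 1 := by
      rw [← Real.exp_add]
      norm_num
    calc I s = I s * Real.exp (-μ₁ * s) * Real.exp (μ₁ * s) := by
          rw [mul_assoc, mul_comm (Real.exp (-μ₁ * s)), h3, mul_one]
      _ = I 0 * Real.exp (μ₁ * s) := by rw [h2]
  set Z : ℝ → ℝ := fun s => Real.exp (-μ₂ * s) * V s with hZdef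
  have hZpos : ∀ s, 0 ≤ s → 0 < Z s := fun s hs =>
    mul_pos (Real.exp_pos _) (hV s hs)
  -- derivative of Z
  have hZder : ∀ s, 0 ≤ s → HasDerivAt Z
      (Real.exp (-μ₂ * s) * -μ₂ * V s + Real.exp (-μ₂ * s) * deriv V s) s := by
    intro s hs
    exact (hexp (-μ₂) s).mul (hVd s hs).hasDerivAt
  -- bound on the derivative of Z
  have hzb : ∀ s, 0 ≤ s →
      Real.exp (-μ₂ * s) * -μ₂ * V s + Real.exp (-μ₂ * s) * deriv V s ≤
        -C * Z s ^ ((5 : ℝ) / 3) * (I 0) ^ (-(4 : ℝ) / 3) := by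
    intro s hs
    have hVpos := hV s hs
    have hIpos := hI s hs
    have hIe := hIeq s hs
    have h1 : Real.exp (-μ₂ * s) * -μ₂ * V s + Real.exp (-μ₂ * s) * deriv V s ≤
        Real.exp (-μ₂ * s) * (-(C * V s ^ ((5 : ℝ) / 3) / I s ^ ((4 : ℝ) / 3))) := by
      have := hVde s hs
      have he := (Real.exp_pos (-μ₂ * s)).le
      nlinarith [mul_le_mul_of_nonneg_left this he]
    refine h1.trans ?_
    -- rewrite Z s ^ (5/3)
    have hZ53 : Z s ^ ((5 : ℝ) / 3) =
        Real.exp (-μ₂ * s * (5 / 3)) * V s ^ ((5 : ℝ) / 3) := by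
      rw [hZdef]
      rw [Real.mul_rpow (Real.exp_pos _).le hVpos.le, ← Real.exp_mul]
    have hI43 : I s ^ ((4 : ℝ) / 3) =
        I 0 ^ ((4 : ℝ) / 3) * Real.exp (μ₁ * s * (4 / 3)) := by
      rw [hIe, Real.mul_rpow hI0.le (Real.exp_pos _).le, ← Real.exp_mul]
    rw [hZ53, hI43]
    have hIneg : I 0 ^ (-(4 : ℝ) / 3) = (I 0 ^ ((4 : ℝ) / 3))⁻¹ := by
      rw [neg_div, Real.rpow_neg hI0.le]
    rw [hIneg]
    have hV53 : 0 < V s ^ ((5 : ℝ) / 3) := Real.rpow_pos_of_pos hVpos _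
    have hI43p : 0 < I 0 ^ ((4 : ℝ) / 3) := Real.rpow_pos_of_pos hI0 _
    rw [div_eq_mul_inv, mul_inv]
    have key : Real.exp (-μ₂ * s * (5 / 3)) ≤ Real.exp (-μ₂ * s) * (Real.exp (μ₁ * s * (4 / 3)))⁻¹ := by
      rw [← Real.exp_neg, ← Real.exp_add]
      apply Real.exp_le_exp.2
      nlinarith [mul_nonneg hR.le hs]
    nlinarith [mul_le_mul_of_nonneg_right key
      (le_of_lt (mul_pos (mul_pos hC hV53) (inv_pos.2 hI43p)))]
  -- W and its derivative
  set W : ℝ → ℝ := fun s => Z s ^ (-(2 : ℝ) / 3) with hWdef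
  have hWpos : ∀ s, 0 ≤ s → 0 < W s := fun s hs =>
    Real.rpow_pos_of_pos (hZpos s hs) _
  have hWder : ∀ s, 0 ≤ s → HasDerivAt W
      ((-(2 : ℝ) / 3) * Z s ^ (-(2 : ℝ) / 3 - 1) *
        (Real.exp (-μ₂ * s) * -μ₂ * V s + Real.exp (-μ₂ * s) * deriv V s)) s := by
    intro s hs
    exact (Real.hasDerivAt_rpow_const (Or.inl (hZpos s hs).ne')).comp s (hZder s hs)
  set κ : ℝ := (2 * C / 3) * (I 0) ^ (-(4 : ℝ) / 3) with hκdef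
  have hκpos : 0 < κ := mul_pos (by positivity) (Real.rpow_pos_of_pos hI0 _)
  -- the derivative of W is at least κ
  have hWlb : ∀ s, 0 ≤ s →
      κ ≤ (-(2 : ℝ) / 3) * Z s ^ (-(2 : ℝ) / 3 - 1) *
        (Real.exp (-μ₂ * s) * -μ₂ * V s + Real.exp (-μ₂ * s) * deriv V s) := by
    intro s hs
    have hZp := hZpos s hs
    have h1 := hzb s hs
    have h2 : 0 < Z s ^ (-(2 : ℝ) / 3 - 1) := Real.rpow_pos_of_pos hZp _
    have h3 : Z s ^ (-(2 : ℝ) / 3 - 1) * Z s ^ ((5 : ℝ) / 3) = 1 := by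
      rw [← Real.rpow_add hZp]
      norm_num
    have h4 : (-(2 : ℝ) / 3) * Z s ^ (-(2 : ℝ) / 3 - 1) *
        (-C * Z s ^ ((5 : ℝ) / 3) * (I 0) ^ (-(4 : ℝ) / 3)) = κ := by
      rw [hκdef]
      nlinarith [h3]
    rw [← h4]
    have h5 : (-(2 : ℝ) / 3) * Z s ^ (-(2 : ℝ) / 3 - 1) ≤ 0 := by nlinarith
    nlinarith [mul_le_mul_of_nonpos_left h1 h5]
  -- monotonicity of W s - κ s on [1, ∞)
  have hmono : MonotoneOn (fun s => W s - κ * s) (Ici (1 : ℝ)) := by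
    apply monotoneOn_of_deriv_nonneg (convex_Ici 1)
    · intro x hx
      have hx0 : (0 : ℝ) ≤ x := le_trans zero_le_one hx
      exact ((hWder x hx0).sub ((hasDerivAt_id x).const_mul κ)).continuousAt.continuousWithinAt
    · intro x hx
      rw [interior_Ici] at hx
      have hx0 : (0 : ℝ) ≤ x := le_trans zero_le_one hx.le
      exact (((hWder x hx0).sub ((hasDerivAt_id x).const_mul κ)).differentiableAt).differentiableWithinAt
    · intro x hx
      rw [interior_Ici] at hx
      have hx0 : (0 : ℝ) ≤ x := le_trans zero_le_one hx.le
      have hd : HasDerivAt (fun s => W s - κ * s)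
          ((-(2 : ℝ) / 3) * Z x ^ (-(2 : ℝ) / 3 - 1) *
            (Real.exp (-μ₂ * x) * -μ₂ * V x + Real.exp (-μ₂ * x) * deriv V x) - κ) x := by
        have h : HasDerivAt (fun s => W s - κ * s)
            ((-(2 : ℝ) / 3) * Z x ^ (-(2 : ℝ) / 3 - 1) *
              (Real.exp (-μ₂ * x) * -μ₂ * V x + Real.exp (-μ₂ * x) * deriv V x) - κ * 1) x :=
          (hWder x hx0).sub ((hasDerivAt_id x).const_mul κ)
        rwa [mul_one] at h
      rw [hd.deriv]
      linarith [hWlb x hx0]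
  have hW1 := hWpos 1 zero_le_one
  have ht0 : (0 : ℝ) ≤ t := le_trans zero_le_one ht.le
  have hmt := hmono (self_mem_Ici) (mem_Ici.2 ht.le) ht.le
  simp only at hmt
  -- W t ≥ κ (t - 1)
  have hWt : κ * (t - 1) ≤ W t := by linarith
  have htpos : 0 < t - 1 := by linarith
  have hκt : 0 < κ * (t - 1) := mul_pos hκpos htpos
  -- invert : Z t ≤ (κ (t-1))^{-3/2}
  have hinv : Z t ≤ (κ * (t - 1)) ^ (-(3 : ℝ) / 2) := by
    have h1 : (W t) ^ (-(3 : ℝ) / 2) ≤ (κ * (t - 1)) ^ (-(3 : ℝ) / 2) :=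
      Real.rpow_le_rpow_of_nonpos hκt hWt (by norm_num)
    have h2 : (W t) ^ (-(3 : ℝ) / 2) = Z t := by
      rw [hWdef]
      rw [← Real.rpow_mul (hZpos t ht0).le]
      norm_num
    rwa [h2] at h1
  -- compute the RHS
  have hrhs : (κ * (t - 1)) ^ (-(3 : ℝ) / 2) =
      (2 * C / 3) ^ (-(3 : ℝ) / 2) * (I 0) ^ 2 * (t - 1) ^ (-(3 : ℝ) / 2) := by
    rw [hκdef, Real.mul_rpow (le_of_lt hκpos) htpos.le,
        Real.mul_rpow (by positivity) (Real.rpow_pos_of_pos hI0 _).le,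
        ← Real.rpow_mul hI0.le]
    norm_num
  rw [hrhs] at hinv
  -- conclude
  have hVZ : V t = Real.exp (μ₂ * t) * Z t := by
    rw [hZdef]
    simp only
    rw [← mul_assoc, ← Real.exp_add]
    norm_num
  rw [hVZ]
  have := mul_le_mul_of_nonneg_left hinv (Real.exp_pos (μ₂ * t)).le
  calc Real.exp (μ₂ * t) * Z t ≤ Real.exp (μ₂ * t) *
        ((2 * C / 3) ^ (-(3 : ℝ) / 2) * (I 0) ^ 2 * (t - 1) ^ (-(3 : ℝ) / 2)) := this
    _ = (2 * C / 3) ^ (-(3 : ℝ) / 2) * Real.exp (μ₂ * t) * (I 0) ^ 2 * (t - 1) ^ (-(3 : ℝ) / 2) := by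
        ring
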